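/- Let $\alpha > 0$, $\gamma \in \mathbb{R}$, $l \in \mathbb{R}$, $n \in \mathbb{Z}\setminus\{0\}$. The Fourier transform (in $t$) of $t \mapsto e^{-\alpha n^2 |t| + i l t}$ equals $\tau \mapsto \frac{2\alpha n^2}{\alpha^2 n^4 + (\tau - l)^2}$, and consequently for any $b$ with $1/2 < b < 3/2$ there is a constant $C$ depending only on $\alpha, b$ such that $\int_{\mathbb{R}} (n^2 + |\tau - l|)^{2b} \left|\mathcal{F}[e^{-\alpha n^2|t| + i l t}](\tau)\right|^2 d\tau \leq C |n|^{4b - 2}$. -/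

import Mathlib

open MeasureTheory Real Complex Set Filter

lemma aux_intOn (z : ℂ) (hz : z.re < 0) :
    IntegrableOn (fun t : ℝ => Complex.exp (z * t)) (Ioi (0:ℝ)) := by
  have hb : (0:ℝ) < -z.re := by linarith
  have h : IntegrableOn (fun t : ℝ => Real.exp (z.re * t)) (Ioi (0:ℝ)) := by
    simpa [neg_neg] using exp_neg_integrableOn_Ioi 0 hb
  refine Integrable.mono' h ?_ ?_
  · exact (Complex.continuous_exp.comp (by continuity)).aestronglyMeasurable
  · filter_upwards with t
    rw [Complex.norm_exp]
    apply le_of_eq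
    congr 1
    simp [Complex.mul_re]

lemma aux_exp_Ioi (z : ℂ) (hz : z.re < 0) :
    ∫ t in Ioi (0:ℝ), Complex.exp (z * t) = -z⁻¹ := by
  have hz0 : z ≠ 0 := fun h => by simp [h] at hz
  have hderiv : ∀ x ∈ Ici (0:ℝ), HasDerivAt (fun t : ℝ => z⁻¹ * Complex.exp (z * t))
      (Complex.exp (z * x)) x := by
    intro x _
    have h1 : HasDerivAt (fun t : ℝ => z * (t:ℂ)) z x := by
      simpa using (Complex.ofRealCLM.hasDerivAt (x := x)).const_mul z
    have h3 := h1.cexp.const_mul z⁻¹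
    exact h3.congr_deriv (by rw [mul_comm (Complex.exp _) z, inv_mul_cancel_left₀ hz0])
  have hnorm : ∀ t : ℝ, ‖Complex.exp (z * t)‖ = Real.exp (z.re * t) := by
    intro t
    rw [Complex.norm_exp]
    congr 1
    simp [Complex.mul_re]
  have htend : Tendsto (fun t : ℝ => z⁻¹ * Complex.exp (z * t)) atTop (nhds 0) := by
    rw [tendsto_zero_iff_norm_tendsto_zero]
    have h1 : Tendsto (fun t : ℝ => z.re * t) atTop atBot :=
      Tendsto.const_mul_atTop_of_neg hz tendsto_id
    have h2 : Tendsto (fun t : ℝ => Real.exp (z.re * t)) atTop (nhds 0) :=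
      Real.tendsto_exp_atBot.comp h1
    have := h2.const_mul ‖z⁻¹‖
    simpa [norm_mul, hnorm] using this
  have := integral_Ioi_of_hasDerivAt_of_tendsto' hderiv (aux_intOn z hz) htend
  simpa using this

lemma aux_neg {f : ℝ → ℂ} (h : IntegrableOn (fun x => f (-x)) (Ioi (0:ℝ))) :
    IntegrableOn f (Iic (0:ℝ)) := by
  have A : MeasurableEmbedding (fun x : ℝ => -x) :=
    (Homeomorph.neg ℝ).isClosedEmbedding.measurableEmbedding
  have hv : (volume : Measure ℝ) = Measure.map (fun x : ℝ => -x) volume :=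
    (Measure.map_neg_eq_self _).symm
  rw [IntegrableOn, hv, Measure.restrict_map A.measurable measurableSet_Iic,
    A.integrable_map_iff]
  have : (fun x : ℝ => -x) ⁻¹' Iic 0 = Ici 0 := by
    ext x; simp
  rw [this]
  rw [← IntegrableOn, integrableOn_Ici_iff_integrableOn_Ioi]
  exact h.congr_fun (fun x _ => rfl) measurableSet_Ioi

lemma aux_full (a c : ℝ) (ha : 0 < a) :
    ∫ t : ℝ, Complex.exp ((-(a*|t|) : ℝ) + c*t*Complex.I) = ((2*a/(a^2+c^2) : ℝ) : ℂ) := by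
  have hzp : ((-a : ℂ) + c*Complex.I).re < 0 := by simp [ha]
  have hzm : ((-a : ℂ) - c*Complex.I).re < 0 := by simp [ha]
  have hIoi_eq : ∀ x ∈ Ioi (0:ℝ), Complex.exp ((-(a*|x|) : ℝ) + c*x*Complex.I)
      = Complex.exp (((-a : ℂ) + c*Complex.I) * x) := by
    intro x hx
    apply congrArg
    rw [abs_of_pos hx]
    push_cast
    ring
  have hneg_eq : ∀ x ∈ Ioi (0:ℝ), (fun t : ℝ => Complex.exp ((-(a*|t|) : ℝ) + c*t*Complex.I)) (-x)
      = Complex.exp (((-a : ℂ) - c*Complex.I) * x) := by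
    intro x hx
    simp only
    apply congrArg
    rw [abs_neg, abs_of_pos hx]
    push_cast
    ring
  have hip : IntegrableOn (fun t : ℝ => Complex.exp ((-(a*|t|) : ℝ) + c*t*Complex.I)) (Ioi (0:ℝ)) :=
    (aux_intOn _ hzp).congr_fun (fun x hx => (hIoi_eq x hx).symm) measurableSet_Ioi
  have him : IntegrableOn (fun t : ℝ => Complex.exp ((-(a*|t|) : ℝ) + c*t*Complex.I)) (Iic (0:ℝ)) :=
    aux_neg ((aux_intOn _ hzm).congr_fun (fun x hx => (hneg_eq x hx).symm) measurableSet_Ioi)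
  have hsplit := (intervalIntegral.integral_Iic_add_Ioi him hip).symm
  rw [hsplit]
  have h1 : ∫ t in Ioi (0:ℝ), Complex.exp ((-(a*|t|) : ℝ) + c*t*Complex.I)
      = -((-a : ℂ) + c*Complex.I)⁻¹ := by
    rw [setIntegral_congr_fun measurableSet_Ioi hIoi_eq]
    exact aux_exp_Ioi _ hzp
  have h2 : ∫ t in Iic (0:ℝ), Complex.exp ((-(a*|t|) : ℝ) + c*t*Complex.I)
      = -((-a : ℂ) - c*Complex.I)⁻¹ := by
    rw [show Iic (0:ℝ) = Iic (-(0:ℝ)) by norm_num, ← integral_comp_neg_Ioi]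
    rw [setIntegral_congr_fun measurableSet_Ioi hneg_eq]
    exact aux_exp_Ioi _ hzm
  rw [h1, h2]
  have hzp0 : ((-a : ℂ) + c*Complex.I) ≠ 0 := fun h => by
    rw [h] at hzp; simp at hzp
  have hzm0 : ((-a : ℂ) - c*Complex.I) ≠ 0 := fun h => by
    rw [h] at hzm; simp at hzm
  have hd : ((a:ℂ)^2 + (c:ℂ)^2) ≠ 0 := by
    intro h
    have h2 : (a^2 + c^2 : ℝ) = 0 := by exact_mod_cast h
    nlinarith
  push_cast
  field_simp
  ring_nf
  simp [Complex.I_sq]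

theorem stmt_11 (α b : ℝ) (hα : 0 < α) (hb1 : 1/2 < b) (hb2 : b < 3/2) :
    ∃ C > 0, ∀ (n : ℤ) (l : ℝ), n ≠ 0 →
      (∀ τ : ℝ,
        ∫ t : ℝ, Complex.exp (-Complex.I * t * τ) *
            Complex.exp (-(α * (n:ℝ)^2 * |t| : ℝ) + Complex.I * l * t) =
          ((2 * α * (n:ℝ)^2 / (α^2 * (n:ℝ)^4 + (τ - l)^2) : ℝ) : ℂ)) ∧
      ∫ τ : ℝ, ((n:ℝ)^2 + |τ - l|) ^ (2*b) *
          ‖∫ t : ℝ, Complex.exp (-Complex.I * t * τ) *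
              Complex.exp (-(α * (n:ℝ)^2 * |t| : ℝ) + Complex.I * l * t)‖^2 ≤
        C * |(n:ℝ)| ^ (4*b - 2) := by
  set K : ℝ := ∫ s : ℝ, (1+|s|)^(2*b) / (α^2+s^2)^2 with hK
  have hK0 : 0 ≤ K :=
    integral_nonneg fun s => div_nonneg (Real.rpow_nonneg (by positivity) _) (by positivity)
  refine ⟨4*α^2*K + 1, by positivity, ?_⟩
  intro n l hn
  have hncast : ((n:ℝ)) ≠ 0 := Int.cast_ne_zero.2 hn
  have hn2 : (0:ℝ) < (n:ℝ)^2 := by positivity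
  have haa : 0 < α * (n:ℝ)^2 := by positivity
  set m : ℝ := |(n:ℝ)| with hm'
  have hm : 0 < m := abs_pos.2 hncast
  have hm1 : 1 ≤ m := by
    rw [hm']
    exact_mod_cast Int.one_le_abs hn
  have hn2m : (n:ℝ)^2 = m^2 := (_root_.sq_abs _).symm
  have hn4m : (n:ℝ)^4 = m^4 := by rw [show ((n:ℝ)^4) = ((n:ℝ)^2)^2 by ring, hn2m]; ring
  have hFT : ∀ τ : ℝ,
      ∫ t : ℝ, Complex.exp (-Complex.I * t * τ) *
          Complex.exp (-(α * (n:ℝ)^2 * |t| : ℝ) + Complex.I * l * t) =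
        ((2 * α * (n:ℝ)^2 / (α^2 * (n:ℝ)^4 + (τ - l)^2) : ℝ) : ℂ) := by
    intro τ
    have h0 : ∀ t : ℝ, Complex.exp (-Complex.I * t * τ) *
        Complex.exp (-(α * (n:ℝ)^2 * |t| : ℝ) + Complex.I * l * t)
        = Complex.exp ((-(α * (n:ℝ)^2 * |t|) : ℝ) + ((l - τ : ℝ) : ℂ)*t*Complex.I) := by
      intro t
      rw [← Complex.exp_add]
      apply congrArg
      push_cast
      ring
    simp_rw [h0]
    rw [aux_full (α * (n:ℝ)^2) (l - τ) haa]
    have : (2 * (α * (n:ℝ)^2) / ((α * (n:ℝ)^2)^2 + (l - τ)^2) : ℝ)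
        = 2 * α * (n:ℝ)^2 / (α^2 * (n:ℝ)^4 + (τ - l)^2) := by
      congr 1 <;> ring
    rw [this]
  refine ⟨hFT, ?_⟩
  simp only [hFT, Complex.norm_real, Real.norm_eq_abs, _root_.sq_abs]
  set g : ℝ → ℝ := fun u => ((n:ℝ)^2 + |u|) ^ (2*b) *
    (2 * α * (n:ℝ)^2 / (α^2 * (n:ℝ)^4 + u^2))^2 with hg
  have hstep1 : (∫ τ : ℝ, ((n:ℝ)^2 + |τ - l|) ^ (2*b) *
      (2 * α * (n:ℝ)^2 / (α^2 * (n:ℝ)^4 + (τ - l)^2))^2) = ∫ u : ℝ, g u := by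
    exact integral_sub_right_eq_self g l
  rw [hstep1]
  have hsub := MeasureTheory.Measure.integral_comp_mul_left g ((n:ℝ)^2)
  have hstep2 : ∫ u : ℝ, g u = (n:ℝ)^2 * ∫ x : ℝ, g ((n:ℝ)^2 * x) := by
    rw [hsub, abs_inv, abs_of_pos hn2, smul_eq_mul]
    field_simp
  have hpt : ∀ x : ℝ, g ((n:ℝ)^2 * x)
      = m ^ (4*b-4) * (4*α^2 * ((1+|x|)^(2*b) / (α^2+x^2)^2)) := by
    intro x
    have hax : (0:ℝ) < α^2 + x^2 := by positivity
    have e0 : |(n:ℝ)^2 * x| = (n:ℝ)^2 * |x| := by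
      rw [abs_mul, abs_of_pos hn2]
    have e1 : ((n:ℝ)^2 + |(n:ℝ)^2 * x|) ^ (2*b) = m ^ (4*b) * (1+|x|)^(2*b) := by
      rw [e0, show (n:ℝ)^2 + (n:ℝ)^2 * |x| = (n:ℝ)^2 * (1+|x|) by ring,
        Real.mul_rpow hn2.le (by positivity), hn2m,
        ← Real.rpow_natCast m 2, ← Real.rpow_mul hm.le,
        show ((2:ℕ):ℝ) * (2*b) = 4*b by push_cast; ring]
    have e2 : (2 * α * (n:ℝ)^2 / (α^2 * (n:ℝ)^4 + ((n:ℝ)^2 * x)^2))^2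
        = 4*α^2 / (α^2+x^2)^2 / m^4 := by
      rw [hn2m, hn4m]
      have hm0 : m ≠ 0 := hm.ne'
      field_simp
      ring
    rw [hg]
    simp only
    rw [e1, e2, Real.rpow_sub hm]
    have h4 : m ^ (4:ℝ) = m^(4:ℕ) := by
      rw [← Real.rpow_natCast m 4]; norm_num
    rw [h4]
    have hm0 : m ≠ 0 := hm.ne'
    field_simp
  rw [hstep2]
  simp_rw [hpt]
  rw [integral_const_mul, integral_const_mul, ← hK]
  have key : (n:ℝ)^2 * m^(4*b-4) = m^(4*b-2) := by
    rw [hn2m, ← Real.rpow_natCast m 2, ← Real.rpow_add hm]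
    congr 1
    push_cast
    ring
  calc (n:ℝ)^2 * (m^(4*b-4) * (4*α^2 * K)) = m^(4*b-2) * (4*α^2*K) := by
        rw [← key]; ring
    _ ≤ (4*α^2*K + 1) * m^(4*b-2) := by
        nlinarith [Real.rpow_nonneg (abs_nonneg ((n:ℝ))) (4*b-2), hK0, sq_nonneg α]
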